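/- If a finite group G has exactly two cyclic subgroups of order 4 and has an element of order 3, then G has an element of order 12. -/

import Mathlib

open Subgroup Pointwise

lemma zpowers_isCyclic' {G : Type*} [Group G] (x : G) : IsCyclic (zpowers x) := by
  refine ⟨⟨⟨x, mem_zpowers x⟩, ?_⟩⟩
  rintro ⟨a, n, rfl⟩
  exact ⟨n, Subtype.ext (by simp)⟩

theorem stmt_10 (G : Type*) [Group G] [Finite G]
    (h4 : Nat.card {H : Subgroup G // IsCyclic H ∧ Nat.card H = 4} = 2)
    (h3 : ∃ g : G, orderOf g = 3) :
    ∃ g : G, orderOf g = 12 := by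
  classical
  obtain ⟨g, hg⟩ := h3
  -- get an element x of order 4
  have hSne : Nonempty {H : Subgroup G // IsCyclic H ∧ Nat.card H = 4} :=
    (Nat.card_pos_iff.mp (by omega)).1
  obtain ⟨⟨K, hKcyc, hKcard⟩⟩ := hSne
  haveI := hKcyc
  obtain ⟨ζ, hζ⟩ := IsCyclic.exists_generator (α := K)
  have hζord : orderOf ζ = 4 := by
    rw [orderOf_eq_card_of_forall_mem_zpowers hζ, hKcard]
  set x : G := (ζ : G) with hxdef
  have hx : orderOf x = 4 := by rw [← hζord]; exact orderOf_coe ζ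
  -- the subgroup generated by x is a member of the type
  have hHcyc : IsCyclic (zpowers x) := zpowers_isCyclic' x
  have hHcard : Nat.card (zpowers x) = 4 := by rw [Nat.card_zpowers, hx]
  -- conjugation permutes the (two) cyclic subgroups of order 4
  set σ : {H : Subgroup G // IsCyclic H ∧ Nat.card H = 4} →
      {H : Subgroup G // IsCyclic H ∧ Nat.card H = 4} := fun K => by
    refine ⟨MulAut.conj g • K.1, ?_, ?_⟩
    · haveI := K.2.1
      exact isCyclic_of_surjective (equivSMul (MulAut.conj g) K.1).toMonoidHom
        (equivSMul (MulAut.conj g) K.1).surjective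
    · have hc := Nat.card_congr (equivSMul (MulAut.conj g) K.1).toEquiv
      rw [← hc]
      exact K.2.2
  have hgg : g * g * g = 1 := by
    have h := pow_orderOf_eq_one g
    rw [hg] at h
    calc g * g * g = g ^ 3 := by rw [pow_succ, pow_succ, pow_one]
    _ = 1 := h
  have hσ3 : ∀ K, σ (σ (σ K)) = K := by
    intro K
    apply Subtype.ext
    show MulAut.conj g • (MulAut.conj g • (MulAut.conj g • K.1)) = K.1
    rw [smul_smul, smul_smul, ← map_mul, ← map_mul, hgg, map_one, one_smul]
  -- build the permutation and show it is trivial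
  haveI : Finite {H : Subgroup G // IsCyclic H ∧ Nat.card H = 4} :=
    (Nat.card_pos_iff.mp (by omega)).2
  haveI : Fintype {H : Subgroup G // IsCyclic H ∧ Nat.card H = 4} := Fintype.ofFinite _
  set e : Equiv.Perm {H : Subgroup G // IsCyclic H ∧ Nat.card H = 4} :=
    ⟨σ, σ ∘ σ, fun K => hσ3 K, fun K => hσ3 K⟩ with he
  have he3 : e ^ 3 = 1 := by
    have hee : e ^ 3 = e * e * e := by rw [pow_succ, pow_succ, pow_one]
    rw [hee]
    refine Equiv.ext fun K => ?_
    simp only [Equiv.Perm.mul_apply]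
    exact hσ3 K
  have he2 : e ^ 2 = 1 := by
    have hcard : Fintype.card (Equiv.Perm {H : Subgroup G // IsCyclic H ∧ Nat.card H = 4}) = 2 := by
      rw [Fintype.card_perm, Nat.card_eq_fintype_card.symm.trans h4]
      rfl
    calc e ^ 2 = e ^ Fintype.card (Equiv.Perm _) := by rw [hcard]
    _ = 1 := pow_card_eq_one
  have he1 : e = 1 := by
    calc e = e ^ 3 * (e ^ 2)⁻¹ * (e^2)⁻¹ * e^2 := by group
    _ = 1 := by rw [he3, he2]; group
  -- hence g normalizes zpowers x
  have hfix : MulAut.conj g • (zpowers x) = zpowers x := by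
    have := congrFun (congrArg (fun p => p.toFun) he1) ⟨zpowers x, hHcyc, hHcard⟩
    exact congrArg Subtype.val this
  have hmem : g * x * g⁻¹ ∈ zpowers x := by
    have : MulAut.conj g • x ∈ MulAut.conj g • (zpowers x) :=
      smul_mem_pointwise_smul x _ _ (mem_zpowers x)
    rw [hfix] at this
    simpa [MulAut.conj] using this
  obtain ⟨n, hn⟩ := hmem
  have hn' : x ^ n = g * x * g⁻¹ := hn
  -- conjugation by g = g^3-conjugation is trivial, deduce n ≡ 1 mod 4
  have hconj3 : x ^ (n * n * n) = x := by
    have h1 : g * x * g⁻¹ = x ^ n := hn'.symm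
    have h2 : g * x ^ n * g⁻¹ = x ^ (n * n) := by
      rw [← conj_zpow, h1, ← zpow_mul]
    have h3 : g * x ^ (n*n) * g⁻¹ = x ^ (n * n * n) := by
      rw [← conj_zpow, h1, ← zpow_mul]
      congr 1
      ring
    calc x ^ (n*n*n) = g * (g * (g * x * g⁻¹) * g⁻¹) * g⁻¹ := by rw [h1, h2, h3]
    _ = (g * g * g) * x * (g * g * g)⁻¹ := by group
    _ = x := by rw [hgg]; group
  have hdvd : (4:ℤ) ∣ n * n * n - 1 := by
    have : x ^ (n * n * n - 1) = 1 := by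
      rw [zpow_sub, hconj3, zpow_one, mul_inv_cancel]
    have := orderOf_dvd_iff_zpow_eq_one.mpr this
    rwa [hx] at this
  have hn1 : (4:ℤ) ∣ n - 1 := by
    have hz : ((n : ZMod 4)) ^ 3 = 1 := by
      have := (ZMod.intCast_zmod_eq_zero_iff_dvd _ 4).mpr hdvd
      push_cast at this
      linear_combination this
    have hall : ∀ m : ZMod 4, m ^ 3 = 1 → m = 1 := by decide
    have : (n : ZMod 4) = 1 := hall _ hz
    have := (ZMod.intCast_zmod_eq_zero_iff_dvd (n-1) 4).mp (by push_cast; rw [this]; ring)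
    exact this
  have hcomm : Commute g x := by
    have hxn : x ^ n = x := by
      obtain ⟨k, hk⟩ := hn1
      have : x ^ n = x ^ (1 + 4 * k) := by rw [show (1 + 4*k : ℤ) = n by omega]
      rw [this, zpow_add, zpow_one, zpow_mul]
      have : x ^ (4:ℤ) = 1 := by
        rw [show (4:ℤ) = ((4:ℕ):ℤ) by norm_num, zpow_natCast, ← hx, pow_orderOf_eq_one]
      rw [this, one_zpow, mul_one]
    have : g * x * g⁻¹ = x := by rw [← hn', hxn]
    rw [Commute, SemiconjBy]
    calc g * x = (g * x * g⁻¹) * g := by group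
    _ = x * g := by rw [this]
  refine ⟨g * x, ?_⟩
  rw [hcomm.orderOf_mul_eq_mul_orderOf_of_coprime (by rw [hg, hx]; norm_num), hg, hx]
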